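/- If the cost functions C_p : H × U → ℝ are Lipschitz in h with constant L uniformly in u ∈ U and p, then the empirical CVaR map h ↦ inf_{t∈ℝ} { t + (1/(Nα)) Σᵢ [C_p(h, ûⁱ) − t]₊ } is Lipschitz on H with constant L/α, provided the infimum is attained for each h. -/
import Mathlib


theorem stmt_5 {U : Type*} (n N : ℕ) (hN : 0 < N)
    (H : Set (EuclideanSpace ℝ (Fin n))) (hH : H.Nonempty)
    (α L : ℝ) (hα : 0 < α) (hα1 : α < 1) (hL : 0 ≤ L)
    (uhat : Fin N → U) (Cp : EuclideanSpace ℝ (Fin n) → U → ℝ)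
    (hLip : ∀ h ∈ H, ∀ h' ∈ H, ∀ u : U, |Cp h u - Cp h' u| ≤ L * ‖h - h'‖)
    (hmin : ∀ h ∈ H, ∃ t₀ : ℝ, ∀ t : ℝ,
      t₀ + (1 / (N * α)) * ∑ i, max (Cp h (uhat i) - t₀) 0 ≤
        t + (1 / (N * α)) * ∑ i, max (Cp h (uhat i) - t) 0) :
    ∀ h ∈ H, ∀ h' ∈ H,
      |(⨅ t : ℝ, t + (1 / (N * α)) * ∑ i, max (Cp h (uhat i) - t) 0) -
        ⨅ t : ℝ, t + (1 / (N * α)) * ∑ i, max (Cp h' (uhat i) - t) 0| ≤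
          (L / α) * ‖h - h'‖ := by
  intro h hh h' hh'
  set c : ℝ := 1 / (N * α) with hc
  have hNpos : (0:ℝ) < N := by exact_mod_cast hN
  have hcpos : 0 < c := by positivity
  set f : ℝ → ℝ := fun t => t + c * ∑ i, max (Cp h (uhat i) - t) 0 with hf
  set g : ℝ → ℝ := fun t => t + c * ∑ i, max (Cp h' (uhat i) - t) 0 with hg
  have key : ∀ t : ℝ, |f t - g t| ≤ (L / α) * ‖h - h'‖ := by
    intro t
    have heq : f t - g t
        = c * ∑ i, (max (Cp h (uhat i) - t) 0 - max (Cp h' (uhat i) - t) 0) := by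
      simp only [hf, hg, Finset.sum_sub_distrib]
      ring
    rw [heq, abs_mul, abs_of_pos hcpos]
    calc c * |∑ i, (max (Cp h (uhat i) - t) 0 - max (Cp h' (uhat i) - t) 0)|
        ≤ c * ∑ i, |max (Cp h (uhat i) - t) 0 - max (Cp h' (uhat i) - t) 0| := by
          gcongr
          exact Finset.abs_sum_le_sum_abs _ _
      _ ≤ c * ∑ _i : Fin N, L * ‖h - h'‖ := by
          gcongr with i _
          calc |max (Cp h (uhat i) - t) 0 - max (Cp h' (uhat i) - t) 0|
              ≤ |(Cp h (uhat i) - t) - (Cp h' (uhat i) - t)| :=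
                abs_max_sub_max_le_abs _ _ _
            _ = |Cp h (uhat i) - Cp h' (uhat i)| := by ring_nf
            _ ≤ L * ‖h - h'‖ := hLip h hh h' hh' _
      _ = (L / α) * ‖h - h'‖ := by
          rw [Finset.sum_const, Finset.card_univ, Fintype.card_fin, hc]
          field_simp
          ring
  obtain ⟨t₀, ht₀⟩ := hmin h hh
  obtain ⟨t₁, ht₁⟩ := hmin h' hh'
  have hfinf : (⨅ t : ℝ, f t) = f t₀ :=
    le_antisymm (ciInf_le ⟨f t₀, fun x ⟨t, htx⟩ => htx ▸ ht₀ t⟩ t₀) (le_ciInf ht₀)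
  have hginf : (⨅ t : ℝ, g t) = g t₁ :=
    le_antisymm (ciInf_le ⟨g t₁, fun x ⟨t, htx⟩ => htx ▸ ht₁ t⟩ t₁) (le_ciInf ht₁)
  show |(⨅ t : ℝ, f t) - ⨅ t : ℝ, g t| ≤ (L / α) * ‖h - h'‖
  rw [hfinf, hginf, abs_sub_le_iff]
  constructor
  · calc f t₀ - g t₁ ≤ f t₁ - g t₁ := sub_le_sub_right (ht₀ t₁) _
      _ ≤ |f t₁ - g t₁| := le_abs_self _
      _ ≤ _ := key t₁
  · calc g t₁ - f t₀ ≤ g t₀ - f t₀ := sub_le_sub_right (ht₁ t₀) _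
      _ ≤ |f t₀ - g t₀| := by rw [abs_sub_comm]; exact le_abs_self _
      _ ≤ _ := key t₀
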